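/- The nonabelian group of order 21 is not CCA: with G = ⟨a,x | a³ = e, a⁻¹xa = x²⟩ (so x⁷ = e) and b = ax, there is a colour-preserving automorphism of Cay(G; {a^{±1}, b^{±1}}) fixing the identity that is not a group automorphism of G. -/

import Mathlib

set_option maxHeartbeats 1000000

/-- A map `φ` is colour-preserving for the Cayley graph `Cay(G;S)` if it sends each
edge `x — xs` (coloured `{s,s⁻¹}`) to an edge of the same colour. -/
def ColourPreserving {G : Type*} [Group G] (S : Set G) (φ : G → G) : Prop :=
  ∀ x : G, ∀ s ∈ S, φ (x * s) = φ x * s ∨ φ (x * s) = φ x * s⁻¹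

/-- A map `φ` is colour-permuting for `Cay(G;S)` if it permutes the edge colours:
there is a permutation `π` of `S` with `π (s⁻¹) = (π s)⁻¹` and
`φ(xs) ∈ {φ(x) π(s)^{±1}}`. -/
def ColourPermuting {G : Type*} [Group G] (S : Set G) (φ : G → G) : Prop :=
  ∃ π : G → G, Set.BijOn π S S ∧ (∀ s ∈ S, π s⁻¹ = (π s)⁻¹) ∧
    ∀ x : G, ∀ s ∈ S, φ (x * s) = φ x * π s ∨ φ (x * s) = φ x * (π s)⁻¹

/-- `φ : G → G` is affine if it is a group automorphism composed with a left translation. -/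
def IsAffineMap {G : Type*} [Group G] (φ : G → G) : Prop :=
  ∃ (α : G ≃* G) (g : G), ∀ x, φ x = α (g * x)

/-- `G` is CCA if every colour-preserving automorphism of every connected Cayley graph
on `G` is affine. -/
def IsCCA (G : Type*) [Group G] : Prop :=
  ∀ S : Set G, S⁻¹ = S → Subgroup.closure S = ⊤ →
    ∀ φ : Equiv.Perm G, ColourPreserving S ⇑φ → IsAffineMap ⇑φ

/-- `G` is strongly CCA if every colour-permuting automorphism of every connected
Cayley graph on `G` is affine. -/
def IsStronglyCCA (G : Type*) [Group G] : Prop :=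
  ∀ S : Set G, S⁻¹ = S → Subgroup.closure S = ⊤ →
    ∀ φ : Equiv.Perm G, ColourPermuting S ⇑φ → IsAffineMap ⇑φ

/-! ### A concrete model of the nonabelian group of order 21 -/

/-- The concrete nonabelian group of order 21: pairs `(i,j) ∈ ℤ₇ × ℤ₃` with
multiplication `(i,j)(i',j') = (i + 4^j i', j + j')`. -/
structure Hc where
  i : ZMod 7
  j : ZMod 3
deriving DecidableEq, Fintype

namespace Hc

/-- `4^j` in `ℤ₇`. -/
def cpow (q : ZMod 3) : ZMod 7 := 4 ^ q.val

lemma cpow_add : ∀ p q : ZMod 3, cpow (p + q) = cpow p * cpow q := by decide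

lemma cpow_zero' : cpow 0 = 1 := by decide

lemma cpow_neg_mul : ∀ q : ZMod 3, cpow (-q) * cpow q = 1 := by decide

instance : Group Hc where
  mul u v := ⟨u.i + cpow u.j * v.i, u.j + v.j⟩
  one := ⟨0, 0⟩
  inv u := ⟨-(cpow (-u.j) * u.i), -u.j⟩
  mul_assoc u v w := by
    show Hc.mk _ _ = Hc.mk _ _
    rw [Hc.mk.injEq]
    constructor
    · show u.i + cpow u.j * v.i + cpow (u.j + v.j) * w.i
        = u.i + cpow u.j * (v.i + cpow v.j * w.i)
      rw [cpow_add]; ring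
    · exact add_assoc _ _ _
  one_mul u := by
    show Hc.mk _ _ = u
    show Hc.mk ((0 : ZMod 7) + cpow 0 * u.i) (0 + u.j) = u
    rw [cpow_zero']
    simp
  mul_one u := by
    show Hc.mk (u.i + cpow u.j * 0) (u.j + 0) = u
    simp
  inv_mul_cancel u := by
    show Hc.mk (-(cpow (-u.j) * u.i) + cpow (-u.j) * u.i) (-u.j + u.j) = Hc.mk 0 0
    simp

lemma mul_def (u v : Hc) : u * v = ⟨u.i + cpow u.j * v.i, u.j + v.j⟩ := rfl

lemma one_def : (1 : Hc) = ⟨0, 0⟩ := rfl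

/-- The table for the colour-preserving automorphism of the concrete group. -/
def T : Fin 7 → Fin 3 → Hc :=
  ![![⟨0,0⟩,⟨0,1⟩,⟨0,2⟩], ![⟨5,1⟩,⟨5,0⟩,⟨5,2⟩], ![⟨3,1⟩,⟨3,2⟩,⟨3,0⟩],
    ![⟨2,2⟩,⟨2,0⟩,⟨2,1⟩], ![⟨4,2⟩,⟨4,1⟩,⟨4,0⟩], ![⟨1,1⟩,⟨1,0⟩,⟨1,2⟩],
    ![⟨6,1⟩,⟨6,0⟩,⟨6,2⟩]]

/-- The colour-preserving, non-affine automorphism of `Cay(Hc; {A^{±1},B^{±1}})`. -/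
def psiFun (h : Hc) : Hc := T h.i h.j

lemma psi_invol : Function.Involutive psiFun := by
  unfold Function.Involutive; decide

/-- `A` corresponds to `a`. -/
def A : Hc := ⟨0, 1⟩
/-- `X` corresponds to `x`. -/
def X : Hc := ⟨1, 0⟩
/-- `B = A * X` corresponds to `b = a*x`. -/
def B : Hc := ⟨4, 1⟩

lemma B_eq : B = A * X := by decide

lemma psi_one : psiFun 1 = 1 := by decide

lemma psi_colour_A : ∀ h : Hc, psiFun (h * A) = psiFun h * A ∨ psiFun (h * A) = psiFun h * A⁻¹ := by
  decide

lemma psi_colour_A' :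
    ∀ h : Hc, psiFun (h * A⁻¹) = psiFun h * A⁻¹ ∨ psiFun (h * A⁻¹) = psiFun h * A⁻¹⁻¹ := by
  decide

lemma psi_colour_B : ∀ h : Hc, psiFun (h * B) = psiFun h * B ∨ psiFun (h * B) = psiFun h * B⁻¹ := by
  decide

lemma psi_colour_B' :
    ∀ h : Hc, psiFun (h * B⁻¹) = psiFun h * B⁻¹ ∨ psiFun (h * B⁻¹) = psiFun h * B⁻¹⁻¹ := by
  decide

lemma psi_not_hom : psiFun (A * X) ≠ psiFun A * psiFun X := by decide

lemma card_Hc : Fintype.card Hc = 21 := by decide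

end Hc

/-- The nonabelian group of order 21, `G = ⟨a,x | a³ = e, a⁻¹xa = x²⟩`, is not CCA:
with `b = ax`, some colour-preserving automorphism of `Cay(G; {a^{±1}, b^{±1}})` fixes
the identity but is not a group automorphism. -/
theorem stmt_8 {G : Type*} [Group G] [Fintype G] (hcard : Fintype.card G = 21)
    (a x : G) (ha : a ^ 3 = 1) (hax : a⁻¹ * x * a = x ^ 2)
    (hgen : Subgroup.closure {a, x} = ⊤) :
    (∃ φ : Equiv.Perm G, ColourPreserving {a, a⁻¹, a * x, (a * x)⁻¹} ⇑φ ∧ φ 1 = 1 ∧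
      ¬ ∃ α : G ≃* G, ⇑φ = ⇑α) ∧
    ¬ IsCCA G := by
  -- x has order dividing 7
  have hconj : ∀ m : ℕ, a⁻¹ * x ^ m * a = x ^ (2 * m) := by
    intro m
    calc a⁻¹ * x ^ m * a = (a⁻¹ * x * a⁻¹⁻¹) ^ m := by rw [conj_pow]; group
      _ = (x ^ 2) ^ m := by rw [inv_inv, hax]
      _ = x ^ (2 * m) := by rw [← pow_mul]
  have haa : a * a * a = 1 := by rw [← ha, pow_succ, pow_succ, pow_one]
  have h4 : a⁻¹ * x ^ 2 * a = x ^ 4 := by have h := hconj 2; norm_num at h; exact h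
  have h8 : a⁻¹ * x ^ 4 * a = x ^ 8 := by have h := hconj 4; norm_num at h; exact h
  have hx8 : x ^ 8 = x := by
    calc x ^ 8 = a⁻¹ * x ^ 4 * a := h8.symm
      _ = a⁻¹ * (a⁻¹ * x ^ 2 * a) * a := by rw [h4]
      _ = a⁻¹ * (a⁻¹ * (a⁻¹ * x * a) * a) * a := by rw [hax]
      _ = (a * a * a)⁻¹ * x * (a * a * a) := by group
      _ = x := by rw [haa]; group
  have x7 : x ^ 7 = 1 := by
    have h := hx8
    rw [show (8 : ℕ) = 7 + 1 from rfl, pow_succ] at h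
    have := mul_right_cancel (h.trans (one_mul x).symm)
    exact this
  have conj4 : a * x * a⁻¹ = x ^ 4 := by
    have hc2 : (a * x * a⁻¹) ^ 2 = x := by
      rw [conj_pow, ← hax]; group
    have hc7 : (a * x * a⁻¹) ^ 7 = 1 := by
      rw [conj_pow, x7]; group
    calc a * x * a⁻¹ = (a * x * a⁻¹) ^ 8 := by
          rw [show (8:ℕ) = 7 + 1 from rfl, pow_succ, hc7, one_mul]
      _ = ((a * x * a⁻¹) ^ 2) ^ 4 := by rw [← pow_mul]
      _ = x ^ 4 := by rw [hc2]
  have conj_pow4 : ∀ k : ℕ, a * x ^ k * a⁻¹ = x ^ (4 * k) := by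
    intro k
    rw [← conj_pow, conj4, ← pow_mul]
  have conjn : ∀ q m : ℕ, a ^ q * x ^ m = x ^ (4 ^ q * m) * a ^ q := by
    intro q
    induction q with
    | zero => intro m; simp
    | succ n ih =>
      intro m
      calc a ^ (n + 1) * x ^ m = a * (a ^ n * x ^ m) := by rw [pow_succ]; group
        _ = a * (x ^ (4 ^ n * m) * a ^ n) := by rw [ih]
        _ = (a * x ^ (4 ^ n * m) * a⁻¹) * a ^ (n + 1) := by rw [pow_succ]; group
        _ = x ^ (4 * (4 ^ n * m)) * a ^ (n + 1) := by rw [conj_pow4]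
        _ = x ^ (4 ^ (n + 1) * m) * a ^ (n + 1) := by ring_nf
  have hxmod : ∀ m : ℕ, x ^ m = x ^ (m % 7) := by
    intro m
    conv_lhs => rw [← Nat.div_add_mod m 7]
    rw [pow_add, pow_mul, x7, one_pow, one_mul]
  have hamod : ∀ m : ℕ, a ^ m = a ^ (m % 3) := by
    intro m
    conv_lhs => rw [← Nat.div_add_mod m 3]
    rw [pow_add, pow_mul, ha, one_pow, one_mul]
  have key7 : ∀ (n : ℕ) (c : ZMod 7), (n : ZMod 7) = c → x ^ n = x ^ c.val := by
    intro n c h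
    rw [hxmod n, ← ZMod.val_natCast, h]
  have key3 : ∀ (n : ℕ) (c : ZMod 3), (n : ZMod 3) = c → a ^ n = a ^ c.val := by
    intro n c h
    rw [hamod n, ← ZMod.val_natCast, h]
  -- the homomorphism from the concrete group
  have hcpow : ∀ q : ZMod 3, ((4 ^ q.val : ℕ) : ZMod 7) = Hc.cpow q := by
    intro q; push_cast [Hc.cpow]; rfl
  let f : Hc →* G :=
    { toFun := fun h => x ^ h.i.val * a ^ h.j.val
      map_one' := by
        show x ^ (0 : ZMod 7).val * a ^ (0 : ZMod 3).val = 1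
        norm_num [ZMod.val]
        exact (by simp : x ^ 0 * a ^ 0 = (1 : G))
      map_mul' := by
        intro u v
        show x ^ (u.i + Hc.cpow u.j * v.i).val * a ^ (u.j + v.j).val
          = (x ^ u.i.val * a ^ u.j.val) * (x ^ v.i.val * a ^ v.j.val)
        have h1 : x ^ (u.i + Hc.cpow u.j * v.i).val
            = x ^ (u.i.val + 4 ^ u.j.val * v.i.val) := by
          refine (key7 _ _ ?_).symm
          push_cast
          simp [Hc.cpow, ZMod.natCast_val, ZMod.cast_id]
        have h2 : a ^ (u.j + v.j).val = a ^ (u.j.val + v.j.val) := by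
          refine (key3 _ _ ?_).symm
          push_cast
          simp [ZMod.natCast_val, ZMod.cast_id]
        rw [h1, h2]
        calc x ^ (u.i.val + 4 ^ u.j.val * v.i.val) * a ^ (u.j.val + v.j.val)
            = x ^ u.i.val * (x ^ (4 ^ u.j.val * v.i.val) * a ^ u.j.val) * a ^ v.j.val := by
              rw [pow_add, pow_add]; group
          _ = x ^ u.i.val * (a ^ u.j.val * x ^ v.i.val) * a ^ v.j.val := by rw [conjn]
          _ = (x ^ u.i.val * a ^ u.j.val) * (x ^ v.i.val * a ^ v.j.val) := by group }
  have hfa : f Hc.A = a := by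
    show x ^ (0 : ZMod 7).val * a ^ (1 : ZMod 3).val = a
    norm_num [ZMod.val]
    exact (by simp : x ^ 0 * a ^ 1 = a)
  have hfx : f Hc.X = x := by
    show x ^ (1 : ZMod 7).val * a ^ (0 : ZMod 3).val = x
    norm_num [ZMod.val]
    exact (by simp : x ^ 1 * a ^ 0 = x)
  have hfb : f Hc.B = a * x := by
    have : f Hc.B = f Hc.A * f Hc.X := by rw [Hc.B_eq, map_mul]
    rw [this, hfa, hfx]
  have hsurj : Function.Surjective f := by
    rw [← MonoidHom.range_eq_top]
    rw [eq_top_iff, ← hgen, Subgroup.closure_le]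
    rintro y (hy | hy)
    · exact hy ▸ ⟨Hc.A, hfa⟩
    · rw [Set.mem_singleton_iff] at hy; exact hy ▸ ⟨Hc.X, hfx⟩
  have hbij : Function.Bijective f :=
    (Fintype.bijective_iff_surjective_and_card f).mpr
      ⟨hsurj, by rw [Hc.card_Hc, hcard]⟩
  let e : Hc ≃* G := MulEquiv.ofBijective f hbij
  have he : ∀ h : Hc, e h = f h := fun _ => rfl
  let ψ : Equiv.Perm Hc := Hc.psi_invol.toPerm
  have hψ : ∀ h : Hc, ψ h = Hc.psiFun h := fun _ => rfl
  let φ : Equiv.Perm G := (e.toEquiv.symm.trans ψ).trans e.toEquiv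
  have hφ : ∀ g : G, φ g = e (Hc.psiFun (e.symm g)) := fun _ => rfl
  -- generic transport of the colour condition along e
  have main : ∀ (t : Hc) (g : G),
      (∀ h : Hc, Hc.psiFun (h * t) = Hc.psiFun h * t ∨ Hc.psiFun (h * t) = Hc.psiFun h * t⁻¹) →
      (φ (g * e t) = φ g * e t ∨ φ (g * e t) = φ g * (e t)⁻¹) := by
    intro t g hcol
    have hsm : e.symm (g * e t) = e.symm g * t := by
      rw [map_mul, MulEquiv.symm_apply_apply]
    rcases hcol (e.symm g) with h | h
    · left
      rw [hφ, hsm, h, map_mul, ← hφ]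
    · right
      rw [hφ, hsm, h, map_mul, map_inv, ← hφ]
  have hea : e Hc.A = a := by rw [he]; exact hfa
  have heb : e Hc.B = a * x := by rw [he]; exact hfb
  have hcp : ColourPreserving {a, a⁻¹, a * x, (a * x)⁻¹} ⇑φ := by
    intro g s hs
    rcases hs with rfl | rfl | rfl | rfl
    · rw [← hea]; exact main Hc.A g Hc.psi_colour_A
    · rw [← hea, ← map_inv]; exact main Hc.A⁻¹ g Hc.psi_colour_A'
    · rw [← heb]; exact main Hc.B g Hc.psi_colour_B
    · rw [← heb, ← map_inv]; exact main Hc.B⁻¹ g Hc.psi_colour_B'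
  have hφ1 : φ 1 = 1 := by
    rw [hφ, map_one, Hc.psi_one, map_one]
  have hnot : ¬ ∃ α : G ≃* G, ⇑φ = ⇑α := by
    rintro ⟨α, hα⟩
    have hm : ∀ u v : G, φ (u * v) = φ u * φ v := by
      intro u v; rw [hα]; exact map_mul α u v
    have h1 : φ (e Hc.A * e Hc.X) = e (Hc.psiFun (Hc.A * Hc.X)) := by
      rw [hφ, ← map_mul, MulEquiv.symm_apply_apply]
    have h2 : φ (e Hc.A) * φ (e Hc.X) = e (Hc.psiFun Hc.A * Hc.psiFun Hc.X) := by
      rw [hφ, hφ, MulEquiv.symm_apply_apply, MulEquiv.symm_apply_apply, map_mul]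
    have := hm (e Hc.A) (e Hc.X)
    rw [h1, h2] at this
    exact Hc.psi_not_hom (e.injective this)
  refine ⟨⟨φ, hcp, hφ1, hnot⟩, ?_⟩
  intro hcca
  have hSinv : ({a, a⁻¹, a * x, (a * x)⁻¹} : Set G)⁻¹ = {a, a⁻¹, a * x, (a * x)⁻¹} := by
    ext y
    simp only [Set.mem_inv, Set.mem_insert_iff, Set.mem_singleton_iff]
    constructor
    · rintro (h | h | h | h)
      · right; left; rw [← h, inv_inv]
      · left; rw [inv_eq_iff_eq_inv] at h; rw [h, inv_inv]
      · right; right; right; rw [← h, inv_inv]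
      · right; right; left; rw [inv_eq_iff_eq_inv] at h; rw [h, inv_inv]
    · rintro (rfl | rfl | rfl | rfl)
      · right; left; rfl
      · left; rw [inv_inv]
      · right; right; right; rfl
      · right; right; left; rw [inv_inv]
  have hScl : Subgroup.closure ({a, a⁻¹, a * x, (a * x)⁻¹} : Set G) = ⊤ := by
    rw [eq_top_iff, ← hgen, Subgroup.closure_le]
    rintro y (hy | hy)
    · exact hy ▸ Subgroup.subset_closure (by simp)
    · rw [Set.mem_singleton_iff] at hy
      rw [hy]
      have hmem : a⁻¹ ∈ Subgroup.closure ({a, a⁻¹, a * x, (a * x)⁻¹} : Set G) :=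
        Subgroup.subset_closure (by simp)
      have hmem2 : a * x ∈ Subgroup.closure ({a, a⁻¹, a * x, (a * x)⁻¹} : Set G) :=
        Subgroup.subset_closure (by simp)
      have : a⁻¹ * (a * x) ∈ Subgroup.closure ({a, a⁻¹, a * x, (a * x)⁻¹} : Set G) :=
        mul_mem hmem hmem2
      simpa using this
  obtain ⟨α, g, hαg⟩ := hcca _ hSinv hScl φ hcp
  have hg : g = 1 := by
    have := hαg 1
    rw [hφ1, mul_one] at this
    have := α.injective (this.symm.trans (map_one α).symm)
    exact this
  apply hnot
  exact ⟨α, by funext y; rw [hαg y, hg, one_mul]⟩
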